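/- For every θ ∈ ℝ and every η ∈ (0, π/2), the real part of tanh(θ − iη)/(θ − iη) is strictly positive. Equivalently, θ·sinh(2θ) + η·sin(2η) > 0 for all θ ∈ ℝ and η ∈ (0, π/2). -/

import Mathlib

open Real

/-- The squared Whitham symbol along the line `Im z = -η` stays in the open right half-plane:
its real part is strictly positive, equivalently `θ sinh(2θ) + η sin(2η) > 0`. -/
theorem re_whitham_symbol_sq_pos
    (θ η : ℝ) (hη₁ : 0 < η) (hη₂ : η < π / 2) :
    0 < (Complex.tanh ((θ : ℂ) - η * Complex.I) / ((θ : ℂ) - η * Complex.I)).re ∧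
    0 < θ * Real.sinh (2 * θ) + η * Real.sin (2 * η) := by
  have hsin : 0 < Real.sin (2 * η) := by
    apply Real.sin_pos_of_pos_of_lt_pi (by linarith) (by linarith)
  have hθs : 0 ≤ θ * Real.sinh (2 * θ) := by
    rcases le_or_gt θ 0 with h | h
    · have : Real.sinh (2 * θ) ≤ 0 := by
        rw [← Real.sinh_zero]
        exact Real.sinh_le_sinh.mpr (by linarith)
      nlinarith
    · have : 0 ≤ Real.sinh (2 * θ) := by
        rw [← Real.sinh_zero]
        exact Real.sinh_le_sinh.mpr (by linarith)
      exact mul_nonneg h.le this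
  have h2 : 0 < θ * Real.sinh (2 * θ) + η * Real.sin (2 * η) := by
    nlinarith [mul_pos hη₁ hsin]
  refine ⟨?_, h2⟩
  set z : ℂ := (θ : ℂ) - η * Complex.I with hz
  have hsinh : Complex.sinh z = (Real.sinh θ * Real.cos η : ℝ) -
      (Real.cosh θ * Real.sin η : ℝ) * Complex.I := by
    rw [hz, Complex.sinh_sub, Complex.sinh_mul_I, Complex.cosh_mul_I]
    push_cast [← Complex.ofReal_sinh, ← Complex.ofReal_cosh, ← Complex.ofReal_sin,
      ← Complex.ofReal_cos]
    ring
  have hcosh : Complex.cosh z = (Real.cosh θ * Real.cos η : ℝ) -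
      (Real.sinh θ * Real.sin η : ℝ) * Complex.I := by
    rw [hz, Complex.cosh_sub, Complex.sinh_mul_I, Complex.cosh_mul_I]
    push_cast [← Complex.ofReal_sinh, ← Complex.ofReal_cosh, ← Complex.ofReal_sin,
      ← Complex.ofReal_cos]
    ring
  rw [Complex.tanh_eq_sinh_div_cosh, div_div]
  rw [Complex.div_re]
  set S := Real.sinh θ
  set C := Real.cosh θ
  set s := Real.sin η
  set c := Real.cos η
  have hre : (Complex.sinh z).re = S * c := by rw [hsinh]; simp
  have him : (Complex.sinh z).im = -(C * s) := by rw [hsinh]; simp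
  have hbre : (Complex.cosh z * z).re = C * c * θ - S * s * η := by
    rw [hcosh, hz]; simp [Complex.mul_re]
  have hbim : (Complex.cosh z * z).im = -(C * c * η) - S * s * θ := by
    rw [hcosh, hz]; simp [Complex.mul_im]; ring_nf
  have hC2 : C ^ 2 - S ^ 2 = 1 := by
    have := Real.cosh_sq_sub_sinh_sq θ; nlinarith
  have hcs : 2 * s * c = Real.sin (2 * η) := (Real.sin_two_mul η).symm
  have hSC : 2 * S * C = Real.sinh (2 * θ) := by
    have := Real.sinh_two_mul θ; linarith
  have hnum : (Complex.sinh z).re * (Complex.cosh z * z).re +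
      (Complex.sinh z).im * (Complex.cosh z * z).im
      = (θ * Real.sinh (2 * θ) + η * Real.sin (2 * η)) / 2 := by
    rw [hre, him, hbre, hbim, ← hcs, ← hSC]
    have hc2 : s ^ 2 + c ^ 2 = 1 := Real.sin_sq_add_cos_sq η
    linear_combination S * C * θ * hc2 + s * c * η * hC2
  have hns : 0 < Complex.normSq (Complex.cosh z * z) := by
    rw [Complex.normSq_pos]
    apply mul_ne_zero
    · have hcoshre : (Complex.cosh z).re = C * c := by rw [hcosh]; simp
      have hc : 0 < c := Real.cos_pos_of_mem_Ioo ⟨by linarith [Real.pi_pos], hη₂⟩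
      have hCpos : 0 < C := Real.cosh_pos θ
      intro h
      have h0 := congrArg Complex.re h
      rw [hcoshre] at h0
      simp at h0
      rcases h0 with h0 | h0 <;> nlinarith
    · intro h
      have h0 := congrArg Complex.im h
      rw [hz] at h
      have : z.im = -η := by rw [hz]; simp
      rw [this] at h0
      simp at h0
      linarith
  rw [← add_div, hnum]
  positivity
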